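/- The number of reverse alternating involutions of length 2n avoiding the pattern 4321 equals the n-th Motzkin number M_n. -/

import Mathlib

/-- A permutation is an involution if it equals its inverse. -/
def IsInvolution {n : ℕ} (π : Equiv.Perm (Fin n)) : Prop :=
  ∀ i, π (π i) = i

/-- `π` is alternating: `π i < π (i+1)` iff `i` is odd (1-based positions). -/
def IsAlternating {n : ℕ} (π : Equiv.Perm (Fin n)) : Prop :=
  ∀ (i : Fin n) (h : (i : ℕ) + 1 < n), (π i < π ⟨(i : ℕ) + 1, h⟩ ↔ Odd ((i : ℕ) + 1))

/-- `π` is reverse alternating: `π i > π (i+1)` iff `i` is odd (1-based positions). -/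
def IsRevAlternating {n : ℕ} (π : Equiv.Perm (Fin n)) : Prop :=
  ∀ (i : Fin n) (h : (i : ℕ) + 1 < n), (π ⟨(i : ℕ) + 1, h⟩ < π i ↔ Odd ((i : ℕ) + 1))

/-- `σ` contains the pattern `τ`. -/
def Contains {n k : ℕ} (σ : Equiv.Perm (Fin n)) (τ : Equiv.Perm (Fin k)) : Prop :=
  ∃ f : Fin k → Fin n, StrictMono f ∧ ∀ a b : Fin k, σ (f a) < σ (f b) ↔ τ a < τ b

/-- `σ` avoids the pattern `τ`. -/
def Avoids {n k : ℕ} (σ : Equiv.Perm (Fin n)) (τ : Equiv.Perm (Fin k)) : Prop :=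
  ¬ Contains σ τ
def p123 : Equiv.Perm (Fin 3) := ⟨![0,1,2], ![0,1,2], by decide, by decide⟩
def p132 : Equiv.Perm (Fin 3) := ⟨![0,2,1], ![0,2,1], by decide, by decide⟩
def p321 : Equiv.Perm (Fin 3) := ⟨![2,1,0], ![2,1,0], by decide, by decide⟩
def p1234 : Equiv.Perm (Fin 4) := ⟨![0,1,2,3], ![0,1,2,3], by decide, by decide⟩
def p4321 : Equiv.Perm (Fin 4) := ⟨![3,2,1,0], ![3,2,1,0], by decide, by decide⟩
def p3412 : Equiv.Perm (Fin 4) := ⟨![2,3,0,1], ![2,3,0,1], by decide, by decide⟩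
def p3421 : Equiv.Perm (Fin 4) := ⟨![2,3,1,0], ![3,2,0,1], by decide, by decide⟩
def p4312 : Equiv.Perm (Fin 4) := ⟨![3,2,0,1], ![2,3,1,0], by decide, by decide⟩
def p2431 : Equiv.Perm (Fin 4) := ⟨![1,3,2,0], ![3,0,2,1], by decide, by decide⟩
def p4132 : Equiv.Perm (Fin 4) := ⟨![3,0,2,1], ![1,3,2,0], by decide, by decide⟩


inductive MStep : Type
  | U | L | D
deriving DecidableEq

open MStep

instance : Fintype MStep := ⟨{U, L, D}, fun x => by cases x <;> simp⟩

def cu (l : List MStep) : ℕ := l.count U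
def cd (l : List MStep) : ℕ := l.count D

/-- Motzkin path condition. -/
def IsMot (l : List MStep) : Prop :=
  (∀ m, cd (l.take m) ≤ cu (l.take m)) ∧ cd l = cu l

def MPath (n : ℕ) := {l : List MStep // l.length = n ∧ IsMot l}

instance mpathFinite (n : ℕ) : Finite (MPath n) := by
  have : Function.Injective (fun (x : MPath n) => (fun i : Fin n => x.1.get (i.cast x.2.1.symm))) := by
    rintro ⟨l1, h1, _⟩ ⟨l2, h2, _⟩ h
    apply Subtype.ext
    apply List.ext_get (h1.trans h2.symm)
    intro i hi1 hi2
    have := congrFun h ⟨i, h1 ▸ hi1⟩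
    simpa using this
  exact Finite.of_injective _ this

-- predicates for opener (step U or L) and closer (step L or D)
def oP (l : List MStep) (i : ℕ) : Prop := l.getD i D ≠ D
def cP (l : List MStep) (i : ℕ) : Prop := l.getD i U ≠ U

instance (l : List MStep) : DecidablePred (oP l) := fun i => by unfold oP; infer_instance
instance (l : List MStep) : DecidablePred (cP l) := fun i => by unfold cP; infer_instance

lemma oP_lt {l : List MStep} {i : ℕ} (h : oP l i) : i < l.length := by
  by_contra hc
  exact h (List.getD_eq_default _ _ (not_lt.1 hc))

lemma cP_lt {l : List MStep} {i : ℕ} (h : cP l i) : i < l.length := by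
  by_contra hc
  exact h (List.getD_eq_default _ _ (not_lt.1 hc))

lemma oP_finite (l : List MStep) : (setOf (oP l)).Finite :=
  Set.Finite.subset (Set.finite_Iio l.length) (fun i hi => oP_lt hi)

lemma cP_finite (l : List MStep) : (setOf (cP l)).Finite :=
  Set.Finite.subset (Set.finite_Iio l.length) (fun i hi => cP_lt hi)

-- count bridges
lemma count_oP (l : List MStep) (m : ℕ) :
    Nat.count (oP l) m = cu (l.take m) + (l.take m).count L := by
  induction m with
  | zero => simp [cu]
  | succ m ih =>
    rw [Nat.count_succ, ih]
    by_cases hm : m < l.length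
    · rw [List.take_succ]
      have hg : l[m]? = some l[m] := List.getElem?_eq_getElem hm
      rw [hg]
      simp only [List.count_append, cu, Option.toList_some]
      have : oP l m ↔ l[m] ≠ D := by
        unfold oP
        rw [List.getD_eq_getElem _ _ hm]
      rcases hs : l[m] with _|_|_ <;>
        simp [this, hs, List.count_cons] <;> ring
    · have h1 : l.take (m+1) = l.take m := by
        rw [List.take_of_length_le (by omega), List.take_of_length_le (by omega)]
      have h2 : ¬ oP l m := fun h => hm (oP_lt h)
      simp [h1, h2]

lemma count_cP (l : List MStep) (m : ℕ) :
    Nat.count (cP l) m = cd (l.take m) + (l.take m).count L := by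
  induction m with
  | zero => simp [cd]
  | succ m ih =>
    rw [Nat.count_succ, ih]
    by_cases hm : m < l.length
    · rw [List.take_succ]
      have hg : l[m]? = some l[m] := List.getElem?_eq_getElem hm
      rw [hg]
      simp only [List.count_append, cd, Option.toList_some]
      have : cP l m ↔ l[m] ≠ U := by
        unfold cP
        rw [List.getD_eq_getElem _ _ hm]
      rcases hs : l[m] with _|_|_ <;>
        simp [this, hs, List.count_cons] <;> ring
    · have h1 : l.take (m+1) = l.take m := by
        rw [List.take_of_length_le (by omega), List.take_of_length_le (by omega)]
      have h2 : ¬ cP l m := fun h => hm (cP_lt h)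
      simp [h1, h2]

lemma count_cP_le_oP {l : List MStep} (hl : IsMot l) (m : ℕ) :
    Nat.count (cP l) m ≤ Nat.count (oP l) m := by
  rw [count_oP, count_cP]
  have := hl.1 m
  omega

lemma count_cP_top {l : List MStep} (hl : IsMot l) :
    Nat.count (cP l) l.length = Nat.count (oP l) l.length := by
  rw [count_oP, count_cP, List.take_length]
  have := hl.2
  omega

-- card of toFinset
lemma card_toFinset_oP (l : List MStep) :
    (oP_finite l).toFinset.card = Nat.count (oP l) l.length := by
  rw [Nat.count_eq_card_filter_range]
  congr 1
  ext i
  simp only [Set.Finite.mem_toFinset, Set.mem_setOf_eq, Finset.mem_filter, Finset.mem_range]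
  exact ⟨fun h => ⟨oP_lt h, h⟩, fun h => h.2⟩

lemma card_toFinset_cP (l : List MStep) :
    (cP_finite l).toFinset.card = Nat.count (cP l) l.length := by
  rw [Nat.count_eq_card_filter_range]
  congr 1
  ext i
  simp only [Set.Finite.mem_toFinset, Set.mem_setOf_eq, Finset.mem_filter, Finset.mem_range]
  exact ⟨fun h => ⟨cP_lt h, h⟩, fun h => h.2⟩

noncomputable def pf (l : List MStep) (q : ℕ) : ℕ :=
  if q % 2 = 0 then
    if oP l (q / 2) then 2 * Nat.nth (cP l) (Nat.count (oP l) (q / 2)) + 1 else q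
  else
    if cP l (q / 2) then 2 * Nat.nth (oP l) (Nat.count (cP l) (q / 2)) else q

lemma pf_even {l : List MStep} {i : ℕ} : pf l (2*i) =
    if oP l i then 2 * Nat.nth (cP l) (Nat.count (oP l) i) + 1 else 2*i := by
  have h2 : (2*i) % 2 = 0 := by omega
  have h3 : (2*i) / 2 = i := by omega
  rw [pf, if_pos h2, h3]

lemma pf_odd {l : List MStep} {i : ℕ} : pf l (2*i+1) =
    if cP l i then 2 * Nat.nth (oP l) (Nat.count (cP l) i) else 2*i+1 := by
  have h2 : (2*i+1) % 2 = 1 := by omega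
  have h3 : (2*i+1) / 2 = i := by omega
  rw [pf]
  simp only [h2, h3]
  norm_num

section Perm
variable {l : List MStep} (hl : IsMot l)
include hl

lemma opener_k_lt {i : ℕ} (hi : oP l i) :
    Nat.count (oP l) i < (cP_finite l).toFinset.card := by
  rw [card_toFinset_cP]
  have h1 : Nat.count (oP l) (i+1) = Nat.count (oP l) i + 1 := by
    rw [Nat.count_succ, if_pos hi]
  have h2 : Nat.count (oP l) (i+1) ≤ Nat.count (oP l) l.length :=
    (Nat.count_monotone _) (oP_lt hi)
  have h3 := count_cP_top hl
  omega

lemma closer_k_lt {j : ℕ} (hj : cP l j) :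
    Nat.count (cP l) j < (oP_finite l).toFinset.card := by
  rw [card_toFinset_oP]
  have h3 := count_cP_top hl
  have h1 : Nat.count (cP l) (j+1) = Nat.count (cP l) j + 1 := by
    rw [Nat.count_succ, if_pos hj]
  have h2 : Nat.count (cP l) (j+1) ≤ Nat.count (cP l) l.length :=
    (Nat.count_monotone _) (cP_lt hj)
  omega

/-- partner of an opener: basic facts -/
lemma opener_partner {i : ℕ} (hi : oP l i) :
    cP l (Nat.nth (cP l) (Nat.count (oP l) i)) ∧
    Nat.count (cP l) (Nat.nth (cP l) (Nat.count (oP l) i)) = Nat.count (oP l) i ∧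
    i ≤ Nat.nth (cP l) (Nat.count (oP l) i) := by
  set k := Nat.count (oP l) i with hk
  have hklt := opener_k_lt hl hi
  have h1 : cP l (Nat.nth (cP l) k) := Nat.nth_mem_of_lt_card (cP_finite l) hklt
  have h2 : Nat.count (cP l) (Nat.nth (cP l) k) = k :=
    Nat.count_nth_of_lt_card_finite (cP_finite l) hklt
  refine ⟨h1, h2, ?_⟩
  by_contra hc
  push_neg at hc
  have h3 : Nat.count (cP l) (Nat.nth (cP l) k + 1) = k + 1 := by
    rw [Nat.count_succ, if_pos h1, h2]
  have h4 : Nat.count (cP l) (Nat.nth (cP l) k + 1) ≤ Nat.count (cP l) i :=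
    Nat.count_monotone _ hc
  have h5 := count_cP_le_oP hl i
  omega

lemma closer_partner {j : ℕ} (hj : cP l j) :
    oP l (Nat.nth (oP l) (Nat.count (cP l) j)) ∧
    Nat.count (oP l) (Nat.nth (oP l) (Nat.count (cP l) j)) = Nat.count (cP l) j ∧
    Nat.nth (oP l) (Nat.count (cP l) j) ≤ j := by
  set k := Nat.count (cP l) j with hk
  have hklt := closer_k_lt hl hj
  have h1 : oP l (Nat.nth (oP l) k) := Nat.nth_mem_of_lt_card (oP_finite l) hklt
  have h2 : Nat.count (oP l) (Nat.nth (oP l) k) = k :=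
    Nat.count_nth_of_lt_card_finite (oP_finite l) hklt
  refine ⟨h1, h2, ?_⟩
  by_contra hc
  push_neg at hc
  have h3 : Nat.count (oP l) (j + 1) ≤ Nat.count (oP l) (Nat.nth (oP l) k) :=
    Nat.count_monotone _ hc
  have h4 : Nat.count (cP l) (j+1) = k + 1 := by
    rw [Nat.count_succ, if_pos hj, hk]
  have h5 := count_cP_le_oP hl (j+1)
  omega


lemma pf_pf (q : ℕ) : pf l (pf l q) = q := by
  rcases Nat.even_or_odd q with ⟨i, hi⟩ | ⟨i, hi⟩
  · subst hi
    rw [show i + i = 2*i by ring, pf_even]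
    by_cases hi : oP l i
    · rw [if_pos hi, pf_odd]
      obtain ⟨h1, h2, _⟩ := opener_partner hl hi
      rw [if_pos h1, h2, Nat.nth_count hi]
    · rw [if_neg hi, pf_even, if_neg hi]
  · subst hi
    rw [pf_odd]
    by_cases hj : cP l i
    · rw [if_pos hj, pf_even]
      obtain ⟨h1, h2, _⟩ := closer_partner hl hj
      rw [if_pos h1, h2, Nat.nth_count hj]
    · rw [if_neg hj, pf_odd, if_neg hj]

lemma pf_lt {q : ℕ} (hq : q < 2 * l.length) : pf l q < 2 * l.length := by
  rcases Nat.even_or_odd q with ⟨i, hi⟩ | ⟨i, hi⟩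
  · subst hi
    rw [show i + i = 2*i by ring, pf_even]
    by_cases hi : oP l i
    · rw [if_pos hi]
      have := cP_lt (opener_partner hl hi).1
      omega
    · rw [if_neg hi]; omega
  · subst hi
    rw [pf_odd]
    by_cases hj : cP l i
    · rw [if_pos hj]
      have := oP_lt (closer_partner hl hj).1
      omega
    · rw [if_neg hj]; omega

/-- pf at even position is ≥ position; > iff opener -/
lemma pf_even_ge {i : ℕ} : 2*i ≤ pf l (2*i) := by
  rw [pf_even]
  by_cases hi : oP l i
  · rw [if_pos hi]
    have := (opener_partner hl hi).2.2
    omega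
  · rw [if_neg hi]

lemma pf_even_gt {i : ℕ} (hi : oP l i) : 2*i < pf l (2*i) := by
  rw [pf_even, if_pos hi]
  have := (opener_partner hl hi).2.2
  omega

lemma pf_odd_le {i : ℕ} : pf l (2*i+1) ≤ 2*i+1 := by
  rw [pf_odd]
  by_cases hj : cP l i
  · rw [if_pos hj]
    have := (closer_partner hl hj).2.2
    omega
  · rw [if_neg hj]

/-- the descent at even positions -/
lemma pf_descent {i : ℕ} (hlen : i < l.length) : pf l (2*i+1) < pf l (2*i) := by
  by_cases hi : oP l i
  · have h1 := pf_even_gt hl hi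
    have h2 := pf_odd_le hl (i := i)
    -- values 2i+1 vs > 2i: equality possible only if pf(2i) = 2i+1 = pf(2i+1); injectivity-ish
    rcases Nat.lt_or_ge (pf l (2*i+1)) (pf l (2*i)) with h | h
    · exact h
    · exfalso
      -- pf l (2*i) = 2*i+1 = pf l (2*i+1)
      have e1 : pf l (2*i) = 2*i+1 := by omega
      have e2 : pf l (2*i+1) = 2*i+1 := by omega
      have := pf_pf hl (2*i)
      rw [e1, e2] at this
      omega
  · -- step is D (since i < length and not opener); so cP l i
    have hD : l.getD i D = D := by
      by_contra hc; exact hi hc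
    have hcp : cP l i := by
      unfold cP
      rw [List.getD_eq_getElem _ _ hlen] at hD ⊢
      rw [hD]; simp
    have e1 : pf l (2*i) = 2*i := by rw [pf_even, if_neg hi]
    rw [pf_odd, if_pos hcp, e1]
    obtain ⟨h1, h2, h3⟩ := closer_partner hl hcp
    -- partner is an opener ≤ i but ≠ i since ¬ oP l i
    have : Nat.nth (oP l) (Nat.count (cP l) i) ≠ i := fun h => hi (h ▸ h1)
    omega

/-- FIFO monotonicity of openers -/
lemma pf_mono_openers {i1 i2 : ℕ} (h12 : i1 < i2) (h1 : oP l i1) (h2 : oP l i2) :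
    pf l (2*i1) < pf l (2*i2) := by
  rw [pf_even, if_pos h1, pf_even, if_pos h2]
  have hk : Nat.count (oP l) i1 < Nat.count (oP l) i2 := by
    have e1 : Nat.count (oP l) (i1+1) = Nat.count (oP l) i1 + 1 := by
      rw [Nat.count_succ, if_pos h1]
    have e2 : Nat.count (oP l) (i1+1) ≤ Nat.count (oP l) i2 := Nat.count_monotone _ h12
    omega
  have := Nat.nth_lt_nth_of_lt_card (cP_finite l) hk (opener_k_lt hl h2)
  omega

lemma pf_mono_closers {j1 j2 : ℕ} (h12 : j1 < j2) (h1 : cP l j1) (h2 : cP l j2) :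
    pf l (2*j1+1) < pf l (2*j2+1) := by
  rw [pf_odd, if_pos h1, pf_odd, if_pos h2]
  have hk : Nat.count (cP l) j1 < Nat.count (cP l) j2 := by
    have e1 : Nat.count (cP l) (j1+1) = Nat.count (cP l) j1 + 1 := by
      rw [Nat.count_succ, if_pos h1]
    have e2 : Nat.count (cP l) (j1+1) ≤ Nat.count (cP l) j2 := Nat.count_monotone _ h12
    omega
  have := Nat.nth_lt_nth_of_lt_card (oP_finite l) hk (closer_k_lt hl h2)
  omega

end Perm

section PermBuild
variable {l : List MStep} (hl : IsMot l)
include hl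

lemma pf_gt_mono {q1 q2 : ℕ} (h12 : q1 < q2) (h1 : (q1:ℕ) < pf l q1) (h2 : q2 < pf l q2) :
    pf l q1 < pf l q2 := by
  rcases Nat.even_or_odd q1 with ⟨a, ha⟩ | ⟨a, ha⟩
  · rcases Nat.even_or_odd q2 with ⟨b, hb⟩ | ⟨b, hb⟩
    · subst ha hb
      rw [show a + a = 2*a by ring] at *
      rw [show b + b = 2*b by ring] at *
      have hoa : oP l a := by
        by_contra hc
        rw [pf_even, if_neg hc] at h1; omega
      have hob : oP l b := by
        by_contra hc
        rw [pf_even, if_neg hc] at h2; omega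
      exact pf_mono_openers hl (by omega) hoa hob
    · exfalso; subst hb; have := pf_odd_le hl (i := b); omega
  · exfalso; subst ha; have := pf_odd_le hl (i := a); omega

lemma pf_lt_mono {q1 q2 : ℕ} (h12 : q1 < q2) (h1 : pf l q1 < q1) (h2 : pf l q2 < q2) :
    pf l q1 < pf l q2 := by
  rcases Nat.even_or_odd q1 with ⟨a, ha⟩ | ⟨a, ha⟩
  · exfalso; subst ha; rw [show a + a = 2*a by ring] at h1; have := pf_even_ge hl (i := a); omega
  · rcases Nat.even_or_odd q2 with ⟨b, hb⟩ | ⟨b, hb⟩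
    · exfalso; subst hb; rw [show b + b = 2*b by ring] at h2; have := pf_even_ge hl (i := b); omega
    · subst ha hb
      have hca : cP l a := by
        by_contra hc
        rw [pf_odd, if_neg hc] at h1; omega
      have hcb : cP l b := by
        by_contra hc
        rw [pf_odd, if_neg hc] at h2; omega
      exact pf_mono_closers hl (by omega) hca hcb

end PermBuild

noncomputable def mkPerm (l : List MStep) (hl : IsMot l) {n : ℕ} (hn : l.length = n) :
    Equiv.Perm (Fin (2*n)) where
  toFun x := ⟨pf l x, by
    have h := pf_lt hl (q := (x:ℕ)) (by rw [hn]; exact x.2)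
    rwa [hn] at h⟩
  invFun x := ⟨pf l x, by
    have h := pf_lt hl (q := (x:ℕ)) (by rw [hn]; exact x.2)
    rwa [hn] at h⟩
  left_inv x := by
    apply Fin.ext
    exact pf_pf hl x
  right_inv x := by
    apply Fin.ext
    exact pf_pf hl x

lemma mkPerm_apply (l : List MStep) (hl : IsMot l) {n : ℕ} (hn : l.length = n)
    (x : Fin (2*n)) : (mkPerm l hl hn x : ℕ) = pf l x := rfl

lemma mkPerm_involution (l : List MStep) (hl : IsMot l) {n : ℕ} (hn : l.length = n) :
    IsInvolution (mkPerm l hl hn) := by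
  intro x
  apply Fin.ext
  rw [mkPerm_apply, mkPerm_apply]
  exact pf_pf hl x

lemma mkPerm_revAlt (l : List MStep) (hl : IsMot l) {n : ℕ} (hn : l.length = n) :
    IsRevAlternating (mkPerm l hl hn) := by
  intro i h
  rw [Fin.lt_def, mkPerm_apply, mkPerm_apply]
  rcases Nat.even_or_odd (i : ℕ) with ⟨m, hm⟩ | ⟨m, hm⟩
  · have hm' : (i : ℕ) = 2*m := by omega
    have hmn : m < l.length := by omega
    simp only [hm']
    constructor
    · intro; exact ⟨m, by omega⟩
    · intro _
      exact pf_descent hl hmn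
  · have hm' : (i : ℕ) = 2*m+1 := by omega
    simp only [hm']
    constructor
    · intro hlt
      exfalso
      have h1 : pf l (2*m+1) ≤ 2*m+1 := pf_odd_le hl
      have h2 : 2*(m+1) ≤ pf l (2*(m+1)) := pf_even_ge hl
      have h3 : (2*m+1)+1 = 2*(m+1) := by ring
      rw [h3] at hlt
      omega
    · intro hodd
      exfalso
      rcases hodd with ⟨t, ht⟩
      omega

lemma mkPerm_avoids (l : List MStep) (hl : IsMot l) {n : ℕ} (hn : l.length = n) :
    Avoids (mkPerm l hl hn) p4321 := by
  rintro ⟨f, hmono, hpat⟩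
  have anti : ∀ a b : Fin 4, a < b → pf l ((f b : ℕ)) < pf l ((f a : ℕ)) := by
    intro a b hab
    have h4 : (p4321 b) < p4321 a := by
      revert hab
      fin_cases a <;> fin_cases b <;> decide
    exact (hpat b a).2 h4
  classical
  let cls : Fin (2*n) → Fin 3 := fun q =>
    if pf l q < (q:ℕ) then 0 else if pf l q = (q:ℕ) then 1 else 2
  have key : ∀ a b : Fin 4, a < b → cls (f a) ≠ cls (f b) := by
    intro a b hlt heq
    have hfab : (f a : ℕ) < f b := hmono hlt
    have hanti := anti a b hlt
    simp only [cls] at heq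
    by_cases c1 : pf l ((f a : ℕ)) < (f a : ℕ)
    · by_cases c2 : pf l ((f b : ℕ)) < (f b : ℕ)
      · have := pf_lt_mono hl hfab c1 c2
        omega
      · by_cases d2 : pf l ((f b : ℕ)) = (f b : ℕ) <;> simp [c1, c2, d2] at heq
    · by_cases c2 : pf l ((f b : ℕ)) < (f b : ℕ)
      · by_cases d1 : pf l ((f a : ℕ)) = (f a : ℕ) <;> simp [c1, c2, d1] at heq
      · by_cases d1 : pf l ((f a : ℕ)) = (f a : ℕ)
        · by_cases d2 : pf l ((f b : ℕ)) = (f b : ℕ)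
          · omega
          · simp [c1, c2, d1, d2] at heq
        · by_cases d2 : pf l ((f b : ℕ)) = (f b : ℕ)
          · simp [c1, c2, d1, d2] at heq
          · have := pf_gt_mono hl hfab (by omega) (by omega)
            omega
  have hinj : Function.Injective (cls ∘ f) := by
    intro a b hab
    by_contra hne
    rcases Ne.lt_or_gt hne with h | h
    · exact key a b h hab
    · exact key b a h hab.symm
  have := Fintype.card_le_of_injective _ hinj
  simp at this

section Surj
variable {n : ℕ} (π : Equiv.Perm (Fin (2*n)))

def Pf (q : ℕ) : ℕ := if h : q < 2*n then (π ⟨q,h⟩ : ℕ) else q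

lemma Pf_lt {q : ℕ} (hq : q < 2*n) : Pf π q < 2*n := by
  rw [Pf, dif_pos hq]
  exact (π ⟨q, hq⟩).2

lemma Pf_ge {q : ℕ} (hq : ¬ q < 2*n) : Pf π q = q := dif_neg hq

variable (hinv : IsInvolution π)

lemma Pf_Pf (hinv : IsInvolution π) (q : ℕ) : Pf π (Pf π q) = q := by
  by_cases hq : q < 2*n
  · have h1 : Pf π q < 2*n := Pf_lt π hq
    rw [Pf, dif_pos h1]
    have : (⟨Pf π q, h1⟩ : Fin (2*n)) = π ⟨q, hq⟩ := by
      apply Fin.ext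
      simp [Pf, dif_pos hq]
    rw [this]
    have := hinv ⟨q, hq⟩
    rw [this]
  · rw [Pf_ge π hq, Pf_ge π hq]

lemma Pf_inj (hinv : IsInvolution π) {q1 q2 : ℕ} (h : Pf π q1 = Pf π q2) : q1 = q2 := by
  have := Pf_Pf π hinv q1
  rw [h, Pf_Pf π hinv] at this
  exact this.symm

lemma Pf_descent (halt : IsRevAlternating π) {m : ℕ} (hm : m < n) :
    Pf π (2*m+1) < Pf π (2*m) := by
  have h1 : 2*m < 2*n := by omega
  have h2 : ((⟨2*m, by omega⟩ : Fin (2*n)) : ℕ) + 1 < 2*n := by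
    show 2*m + 1 < 2*n; omega
  have h3 := (halt ⟨2*m, by omega⟩ h2).2 (show Odd (2*m+1) from ⟨m, by omega⟩)
  rw [Fin.lt_def] at h3
  unfold Pf
  rw [dif_pos (show 2*m+1 < 2*n by omega), dif_pos h1]
  exact h3

lemma noDec4 (hav : Avoids π p4321) {q1 q2 q3 q4 : ℕ}
    (h12 : q1 < q2) (h23 : q2 < q3) (h34 : q3 < q4) (h4 : q4 < 2*n)
    (hv1 : Pf π q2 < Pf π q1) (hv2 : Pf π q3 < Pf π q2) (hv3 : Pf π q4 < Pf π q3) :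
    False := by
  have hq3 : q3 < 2*n := by omega
  have hq2 : q2 < 2*n := by omega
  have hq1 : q1 < 2*n := by omega
  apply hav
  refine ⟨![⟨q1,hq1⟩,⟨q2,hq2⟩,⟨q3,hq3⟩,⟨q4,h4⟩], ?_, ?_⟩
  · intro a b hab
    fin_cases a <;> fin_cases b <;>
      simp_all [Fin.lt_def] <;> omega
  · have e1 : (π ⟨q1,hq1⟩ : ℕ) = Pf π q1 := by simp [Pf, dif_pos hq1]
    have e2 : (π ⟨q2,hq2⟩ : ℕ) = Pf π q2 := by simp [Pf, dif_pos hq2]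
    have e3 : (π ⟨q3,hq3⟩ : ℕ) = Pf π q3 := by simp [Pf, dif_pos hq3]
    have e4 : (π ⟨q4,h4⟩ : ℕ) = Pf π q4 := by simp [Pf, dif_pos h4]
    intro a b
    fin_cases a <;> fin_cases b <;>
      simp [Fin.lt_def, e1, e2, e3, e4, p4321] <;>
      first
        | omega
        | (constructor
           · intro h; omega
           · intro h; omega)

lemma F1odd (hinv : IsInvolution π) (halt : IsRevAlternating π) (hav : Avoids π p4321)
    {m : ℕ} (hm : m < n) : Pf π (2*m+1) ≤ 2*m+1 := by
  by_contra hc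
  push_neg at hc
  set w := Pf π (2*m+1) with hw
  have hx : w < Pf π (2*m) := by
    have := Pf_descent π halt hm
    omega
  have hw2 : w < 2*n := Pf_lt π (by omega)
  have hPw : Pf π w = 2*m+1 := by rw [hw, Pf_Pf π hinv]
  have hx2 : Pf π (2*m) < 2*n := Pf_lt π (by omega)
  have hPx : Pf π (Pf π (2*m)) = 2*m := Pf_Pf π hinv _
  exact noDec4 π hav (show 2*m < 2*m+1 by omega) hc hx hx2
    (by omega) (by omega) (by omega)

lemma F1even (hinv : IsInvolution π) (halt : IsRevAlternating π) (hav : Avoids π p4321)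
    {m : ℕ} (hm : m < n) : 2*m ≤ Pf π (2*m) := by
  by_contra hc
  push_neg at hc
  set v := Pf π (2*m) with hv
  have hPv : Pf π v = 2*m := by rw [hv, Pf_Pf π hinv]
  -- v is even
  rcases Nat.even_or_odd v with ⟨a, ha⟩ | ⟨a, ha⟩
  · have hveq : v = 2*a := by omega
    -- c := Pf (2m+1) < v
    have hdesc : Pf π (2*m+1) < v := by
      have := Pf_descent π halt hm
      omega
    set c := Pf π (2*m+1) with hcdef
    have hPc : Pf π c = 2*m+1 := by rw [hcdef, Pf_Pf π hinv]
    exact noDec4 π hav (show c < v from hdesc) (show v < 2*m from hc)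
      (show 2*m < 2*m+1 by omega) (by omega)
      (by omega) (by omega) (by omega)
  · -- odd v contradicts F1odd
    have hva : v = 2*a+1 := by omega
    have : Pf π (2*a+1) ≤ 2*a+1 := F1odd π hinv halt hav (by omega)
    rw [← hva] at this
    omega

lemma fifo_open (hinv : IsInvolution π) (hav : Avoids π p4321)
    {q1 q2 : ℕ} (h12 : q1 < q2) (hq2 : q2 < 2*n)
    (h1 : q1 < Pf π q1) (h2 : q2 < Pf π q2) : Pf π q1 < Pf π q2 := by
  rcases Nat.lt_trichotomy (Pf π q1) (Pf π q2) with h | h | h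
  · exact h
  · exact absurd (Pf_inj π hinv h) (by omega)
  · exfalso
    have e2 : Pf π (Pf π q2) = q2 := Pf_Pf π hinv _
    have e1 : Pf π (Pf π q1) = q1 := Pf_Pf π hinv _
    have hb : Pf π q1 < 2*n := Pf_lt π (by omega)
    exact noDec4 π hav h12 h2 h hb (by omega) (by omega) (by omega)

lemma fifo_close (hinv : IsInvolution π) (hav : Avoids π p4321)
    {q1 q2 : ℕ} (h12 : q1 < q2) (hq2 : q2 < 2*n)
    (h1 : Pf π q1 < q1) (h2 : Pf π q2 < q2) : Pf π q1 < Pf π q2 := by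
  rcases Nat.lt_trichotomy (Pf π q1) (Pf π q2) with h | h | h
  · exact h
  · exact absurd (Pf_inj π hinv h) (by omega)
  · exfalso
    have e2 : Pf π (Pf π q2) = q2 := Pf_Pf π hinv _
    have e1 : Pf π (Pf π q1) = q1 := Pf_Pf π hinv _
    exact noDec4 π hav h (show Pf π q1 < q1 from h1) h12 hq2 (by omega) (by omega) (by omega)

end Surj

section Recover
variable {n : ℕ} (π : Equiv.Perm (Fin (2*n)))

def lOf : List MStep := (List.range n).map
  (fun m => if Pf π (2*m+1) = 2*m+1 then MStep.U else if Pf π (2*m) = 2*m then MStep.D else MStep.L)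

lemma lOf_length : (lOf π).length = n := by simp [lOf]

lemma lOf_getElem {m : ℕ} (hm : m < n) :
    (lOf π)[m]'(by rw [lOf_length]; exact hm) =
    (if Pf π (2*m+1) = 2*m+1 then MStep.U else if Pf π (2*m) = 2*m then MStep.D else MStep.L) := by
  simp [lOf]

variable (hinv : IsInvolution π) (halt : IsRevAlternating π) (hav : Avoids π p4321)
include hinv halt hav

lemma oP_lOf (m : ℕ) :
    oP (lOf π) m ↔ m < n ∧ 2*m < Pf π (2*m) := by
  by_cases hm : m < n
  · unfold oP
    rw [List.getD_eq_getElem _ _ (by rw [lOf_length]; exact hm), lOf_getElem π hm]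
    by_cases c1 : Pf π (2*m+1) = 2*m+1
    · rw [if_pos c1]
      have hd := Pf_descent π halt hm
      simp only [ne_eq, reduceCtorEq, not_false_eq_true, true_iff]
      exact ⟨hm, by omega⟩
    · rw [if_neg c1]
      by_cases c2 : Pf π (2*m) = 2*m
      · rw [if_pos c2]
        simp only [ne_eq, not_true_eq_false, false_iff, not_and, not_lt]
        intro; omega
      · rw [if_neg c2]
        have := F1even π hinv halt hav hm
        simp only [ne_eq, reduceCtorEq, not_false_eq_true, true_iff]
        exact ⟨hm, by omega⟩
  · constructor
    · intro h; exact absurd (oP_lt h) (by rw [lOf_length]; exact hm)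
    · intro h; exact absurd h.1 hm

lemma cP_lOf (m : ℕ) :
    cP (lOf π) m ↔ m < n ∧ Pf π (2*m+1) < 2*m+1 := by
  by_cases hm : m < n
  · unfold cP
    rw [List.getD_eq_getElem _ _ (by rw [lOf_length]; exact hm), lOf_getElem π hm]
    by_cases c1 : Pf π (2*m+1) = 2*m+1
    · rw [if_pos c1]
      simp only [ne_eq, not_true_eq_false, false_iff, not_and, not_lt]
      intro; omega
    · rw [if_neg c1]
      have := F1odd π hinv halt hav hm
      have hne : (if Pf π (2*m) = 2*m then MStep.D else MStep.L) ≠ MStep.U := by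
        split <;> simp
      simp only [hne, ne_eq, not_false_eq_true, true_iff]
      exact ⟨hm, by omega⟩
  · constructor
    · intro h; exact absurd (cP_lt h) (by rw [lOf_length]; exact hm)
    · intro h; exact absurd h.1 hm

lemma openPartner {m : ℕ} (hm : m < n) (ho : 2*m < Pf π (2*m)) :
    ∃ j, Pf π (2*m) = 2*j+1 ∧ m ≤ j ∧ j < n ∧ Pf π (2*j+1) = 2*m := by
  have hv : Pf π (2*m) < 2*n := Pf_lt π (by omega)
  rcases Nat.even_or_odd (Pf π (2*m)) with ⟨a, ha⟩ | ⟨a, ha⟩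
  · exfalso
    have ha' : Pf π (2*m) = 2*a := by omega
    have : Pf π (2*a) = 2*m := by rw [← ha', Pf_Pf π hinv]
    have := F1even π hinv halt hav (show a < n by omega)
    omega
  · have ha' : Pf π (2*m) = 2*a+1 := by omega
    refine ⟨a, ha', by omega, by omega, ?_⟩
    rw [← ha', Pf_Pf π hinv]

lemma closerPartner {j : ℕ} (hj : j < n) (hc : Pf π (2*j+1) < 2*j+1) :
    ∃ m', Pf π (2*j+1) = 2*m' ∧ m' ≤ j ∧ 2*m' < Pf π (2*m') ∧ Pf π (2*m') = 2*j+1 := by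
  rcases Nat.even_or_odd (Pf π (2*j+1)) with ⟨a, ha⟩ | ⟨a, ha⟩
  · have ha' : Pf π (2*j+1) = 2*a := by omega
    have hPa : Pf π (2*a) = 2*j+1 := by rw [← ha', Pf_Pf π hinv]
    exact ⟨a, ha', by omega, by omega, hPa⟩
  · exfalso
    have ha' : Pf π (2*j+1) = 2*a+1 := by omega
    have hPa : Pf π (2*a+1) = 2*j+1 := by rw [← ha', Pf_Pf π hinv]
    have := F1odd π hinv halt hav (show a < n by omega)
    omega

lemma countEq {m j : ℕ} (hm : m < n) (ho : 2*m < Pf π (2*m)) (hj : Pf π (2*m) = 2*j+1) :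
    Nat.count (cP (lOf π)) j = Nat.count (oP (lOf π)) m := by
  have hjn : j < n := by have := Pf_lt π (show 2*m < 2*n by omega); omega
  have hPj : Pf π (2*j+1) = 2*m := by rw [← hj, Pf_Pf π hinv]
  have hmj : m ≤ j := by omega
  rw [Nat.count_eq_card_filter_range, Nat.count_eq_card_filter_range]
  apply Finset.card_bij (fun j' _ => Pf π (2*j'+1) / 2)
  · rintro j' hj'
    simp only [Finset.mem_filter, Finset.mem_range] at hj' ⊢
    obtain ⟨hj'j, hj'c⟩ := hj'
    rw [cP_lOf π hinv halt hav] at hj'c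
    obtain ⟨m', hm'1, hm'2, hm'3, hm'4⟩ := closerPartner π hinv halt hav hj'c.1 hj'c.2
    rw [hm'1]
    simp only [Nat.mul_div_cancel_left _ (by norm_num : 0 < 2)]
    have hmlt : 2*m' < 2*m := by
      have := fifo_close π hinv hav (show 2*j'+1 < 2*j+1 by omega)
        (show 2*j+1 < 2*n by omega) hj'c.2 (by omega)
      omega
    constructor
    · omega
    · rw [oP_lOf π hinv halt hav]
      exact ⟨by omega, by omega⟩
  · rintro j1 hj1 j2 hj2 heq
    simp only [Finset.mem_filter, Finset.mem_range] at hj1 hj2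
    rw [cP_lOf π hinv halt hav] at hj1 hj2
    obtain ⟨m1, e1, _, _, _⟩ := closerPartner π hinv halt hav hj1.2.1 hj1.2.2
    obtain ⟨m2, e2, _, _, _⟩ := closerPartner π hinv halt hav hj2.2.1 hj2.2.2
    replace heq : Pf π (2*j1+1)/2 = Pf π (2*j2+1)/2 := heq
    rw [e1, e2] at heq
    simp only [Nat.mul_div_cancel_left _ (by norm_num : 0 < 2)] at heq
    have : Pf π (2*j1+1) = Pf π (2*j2+1) := by rw [e1, e2, heq]
    have := Pf_inj π hinv this
    omega
  · rintro m' hm'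
    simp only [Finset.mem_filter, Finset.mem_range] at hm'
    obtain ⟨hm'm, hm'o⟩ := hm'
    rw [oP_lOf π hinv halt hav] at hm'o
    obtain ⟨j', e1, e2, e3, e4⟩ := openPartner π hinv halt hav hm'o.1 hm'o.2
    refine ⟨j', ?_, ?_⟩
    · simp only [Finset.mem_filter, Finset.mem_range]
      have : 2*j'+1 < 2*j+1 := by
        have := fifo_open π hinv hav (show 2*m' < 2*m by omega)
          (show 2*m < 2*n by omega) hm'o.2 (by omega)
        omega
      constructor
      · omega
      · rw [cP_lOf π hinv halt hav]
        exact ⟨e3, by omega⟩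
    · rw [e4]
      omega

lemma count_cP_le_count_oP_lOf (m : ℕ) :
    Nat.count (cP (lOf π)) m ≤ Nat.count (oP (lOf π)) m := by
  rw [Nat.count_eq_card_filter_range, Nat.count_eq_card_filter_range]
  apply Finset.card_le_card_of_injOn (fun j' => Pf π (2*j'+1) / 2)
  · rintro j' hj'
    simp only [Finset.mem_coe, Finset.mem_filter, Finset.mem_range] at hj' ⊢
    obtain ⟨hj'm, hj'c⟩ := hj'
    rw [cP_lOf π hinv halt hav] at hj'c
    obtain ⟨m', e1, e2, e3, e4⟩ := closerPartner π hinv halt hav hj'c.1 hj'c.2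
    rw [e1]
    simp only [Nat.mul_div_cancel_left _ (by norm_num : 0 < 2)]
    refine ⟨by omega, ?_⟩
    rw [oP_lOf π hinv halt hav]
    exact ⟨by omega, e3⟩
  · rintro j1 hj1 j2 hj2 heq
    simp only [Finset.mem_coe, Finset.mem_filter, Finset.mem_range] at hj1 hj2
    rw [cP_lOf π hinv halt hav] at hj1 hj2
    obtain ⟨m1, e1, _, _, _⟩ := closerPartner π hinv halt hav hj1.2.1 hj1.2.2
    obtain ⟨m2, e2, _, _, _⟩ := closerPartner π hinv halt hav hj2.2.1 hj2.2.2
    replace heq : Pf π (2*j1+1)/2 = Pf π (2*j2+1)/2 := heq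
    rw [e1, e2] at heq
    simp only [Nat.mul_div_cancel_left _ (by norm_num : 0 < 2)] at heq
    have : Pf π (2*j1+1) = Pf π (2*j2+1) := by rw [e1, e2, heq]
    have := Pf_inj π hinv this
    omega

lemma count_oP_le_count_cP_lOf_top :
    Nat.count (oP (lOf π)) n ≤ Nat.count (cP (lOf π)) n := by
  rw [Nat.count_eq_card_filter_range, Nat.count_eq_card_filter_range]
  apply Finset.card_le_card_of_injOn (fun m' => (Pf π (2*m') - 1) / 2)
  · rintro m' hm'
    simp only [Finset.mem_coe, Finset.mem_filter, Finset.mem_range] at hm' ⊢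
    obtain ⟨hm'm, hm'o⟩ := hm'
    rw [oP_lOf π hinv halt hav] at hm'o
    obtain ⟨j', e1, e2, e3, e4⟩ := openPartner π hinv halt hav hm'o.1 hm'o.2
    rw [e1]
    have : (2*j'+1-1)/2 = j' := by omega
    rw [this]
    refine ⟨e3, ?_⟩
    rw [cP_lOf π hinv halt hav]
    exact ⟨e3, by omega⟩
  · rintro m1 hm1 m2 hm2 heq
    simp only [Finset.mem_coe, Finset.mem_filter, Finset.mem_range] at hm1 hm2
    rw [oP_lOf π hinv halt hav] at hm1 hm2
    obtain ⟨j1, e1, _, _, _⟩ := openPartner π hinv halt hav hm1.2.1 hm1.2.2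
    obtain ⟨j2, e2, _, _, _⟩ := openPartner π hinv halt hav hm2.2.1 hm2.2.2
    replace heq : (Pf π (2*m1)-1)/2 = (Pf π (2*m2)-1)/2 := heq
    rw [e1, e2] at heq
    have hj12 : j1 = j2 := by omega
    have : Pf π (2*m1) = Pf π (2*m2) := by rw [e1, e2, hj12]
    have := Pf_inj π hinv this
    omega

lemma lOf_isMot : IsMot (lOf π) := by
  constructor
  · intro m
    have h1 := count_cP_le_count_oP_lOf π hinv halt hav m
    rw [count_oP, count_cP] at h1
    omega
  · have h1 := count_cP_le_count_oP_lOf π hinv halt hav n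
    have h2 := count_oP_le_count_cP_lOf_top π hinv halt hav
    have h3 := count_oP (lOf π) n
    have h4 := count_cP (lOf π) n
    have h5 : (lOf π).take n = lOf π := by
      exact List.take_of_length_le (le_of_eq (lOf_length π))
    simp only [h5] at h3 h4
    omega

lemma Pf_eq_pf (q : ℕ) : Pf π q = pf (lOf π) q := by
  have hMot := lOf_isMot π hinv halt hav
  by_cases hq : q < 2*n
  · rcases Nat.even_or_odd q with ⟨m, hm⟩ | ⟨m, hm⟩
    · have hq' : q = 2*m := by omega
      subst hq'
      have hmn : m < n := by omega
      by_cases ho : 2*m < Pf π (2*m)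
      · obtain ⟨j, e1, e2, e3, e4⟩ := openPartner π hinv halt hav hmn ho
        have hcj : cP (lOf π) j := by
          rw [cP_lOf π hinv halt hav]; exact ⟨e3, by omega⟩
        have hcnt := countEq π hinv halt hav hmn ho e1
        rw [pf_even, if_pos ((oP_lOf π hinv halt hav m).2 ⟨hmn, ho⟩)]
        rw [← hcnt, Nat.nth_count hcj, e1]
      · have hPm : Pf π (2*m) = 2*m := by
          have := F1even π hinv halt hav hmn
          omega
        rw [pf_even, if_neg]
        · exact hPm
        · rw [oP_lOf π hinv halt hav]
          rintro ⟨_, h⟩; omega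
    · have hq' : q = 2*m+1 := by omega
      subst hq'
      have hmn : m < n := by omega
      by_cases hc : Pf π (2*m+1) < 2*m+1
      · obtain ⟨m', e1, e2, e3, e4⟩ := closerPartner π hinv halt hav hmn hc
        have hom' : oP (lOf π) m' := by
          rw [oP_lOf π hinv halt hav]; exact ⟨by omega, e3⟩
        have hcnt := countEq π hinv halt hav (show m' < n by omega) e3 e4
        rw [pf_odd, if_pos ((cP_lOf π hinv halt hav m).2 ⟨hmn, hc⟩)]
        rw [hcnt, Nat.nth_count hom', e1]
      · have hPm : Pf π (2*m+1) = 2*m+1 := by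
          have := F1odd π hinv halt hav hmn
          omega
        rw [pf_odd, if_neg]
        · exact hPm
        · rw [cP_lOf π hinv halt hav]
          rintro ⟨_, h⟩; omega
  · rw [Pf_ge π hq]
    rcases Nat.even_or_odd q with ⟨m, hm⟩ | ⟨m, hm⟩
    · have hq' : q = 2*m := by omega
      subst hq'
      rw [pf_even, if_neg]
      intro h
      have := oP_lt h
      rw [lOf_length] at this
      omega
    · have hq' : q = 2*m+1 := by omega
      subst hq'
      rw [pf_odd, if_neg]
      intro h
      have := cP_lt h
      rw [lOf_length] at this
      omega

lemma mkPerm_lOf :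
    mkPerm (lOf π) (lOf_isMot π hinv halt hav) (lOf_length π) = π := by
  apply Equiv.ext
  intro x
  apply Fin.ext
  rw [mkPerm_apply]
  rw [← Pf_eq_pf π hinv halt hav]
  rw [Pf, dif_pos x.2]

end Recover

section LeftInv
variable {l : List MStep} (hl : IsMot l)

lemma pf_odd_fix_iff {m : ℕ} (hm : m < l.length) :
    pf l (2*m+1) = 2*m+1 ↔ ¬ cP l m := by
  constructor
  · intro h hc
    rw [pf_odd, if_pos hc] at h
    omega
  · intro h
    rw [pf_odd, if_neg h]

lemma pf_even_fix_iff {m : ℕ} (hm : m < l.length) :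
    pf l (2*m) = 2*m ↔ ¬ oP l m := by
  constructor
  · intro h ho
    rw [pf_even, if_pos ho] at h
    omega
  · intro h
    rw [pf_even, if_neg h]

lemma lOf_mkPerm {n : ℕ} (hn : l.length = n) :
    lOf (mkPerm l hl hn) = l := by
  apply List.ext_getElem
  · rw [lOf_length, hn]
  · intro m hm1 hm2
    rw [lOf_length] at hm1
    have hmn : m < l.length := by omega
    rw [lOf_getElem _ hm1]
    have hP : ∀ q, q < 2*n → Pf (mkPerm l hl hn) q = pf l q := by
      intro q hq
      rw [Pf, dif_pos hq, mkPerm_apply]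
    rw [hP _ (by omega), hP _ (by omega)]
    have hcp : cP l m ↔ l[m] ≠ MStep.U := by
      unfold cP
      rw [List.getD_eq_getElem _ _ hmn]
    have hop : oP l m ↔ l[m] ≠ MStep.D := by
      unfold oP
      rw [List.getD_eq_getElem _ _ hmn]
    rcases hs : l[m] with _ | _ | _
    · rw [if_pos]
      rw [pf_odd_fix_iff hmn, hcp, hs]
      simp
    · rw [if_neg, if_neg]
      · rw [pf_even_fix_iff hmn, hop, hs]
        simp
      · rw [pf_odd_fix_iff hmn, hcp, hs]
        simp
    · rw [if_neg, if_pos]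
      · rw [pf_even_fix_iff hmn, hop, hs]
        simp
      · rw [pf_odd_fix_iff hmn, hcp, hs]
        simp

end LeftInv

section Count

@[simp] lemma cd_nil : cd ([] : List MStep) = 0 := rfl
@[simp] lemma cu_nil : cu ([] : List MStep) = 0 := rfl
@[simp] lemma cd_append (a b : List MStep) : cd (a ++ b) = cd a + cd b := List.count_append
@[simp] lemma cu_append (a b : List MStep) : cu (a ++ b) = cu a + cu b := List.count_append
@[simp] lemma cd_cons_U (t : List MStep) : cd (MStep.U :: t) = cd t := by
  simp [cd, List.count_cons]
@[simp] lemma cd_cons_L (t : List MStep) : cd (MStep.L :: t) = cd t := by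
  simp [cd, List.count_cons]
@[simp] lemma cd_cons_D (t : List MStep) : cd (MStep.D :: t) = cd t + 1 := by
  simp [cd, List.count_cons]
@[simp] lemma cu_cons_U (t : List MStep) : cu (MStep.U :: t) = cu t + 1 := by
  simp [cu, List.count_cons]
@[simp] lemma cu_cons_L (t : List MStep) : cu (MStep.L :: t) = cu t := by
  simp [cu, List.count_cons]
@[simp] lemma cu_cons_D (t : List MStep) : cu (MStep.D :: t) = cu t := by
  simp [cu, List.count_cons]

lemma isMot_nil : IsMot ([] : List MStep) := by
  constructor
  · intro m; simp
  · simp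

lemma isMot_cons_L {t : List MStep} : IsMot (MStep.L :: t) ↔ IsMot t := by
  constructor
  · rintro ⟨h1, h2⟩
    refine ⟨fun m => ?_, ?_⟩
    · have := h1 (m+1)
      simpa [List.take_succ_cons] using this
    · simpa using h2
  · rintro ⟨h1, h2⟩
    refine ⟨fun m => ?_, ?_⟩
    · cases m with
      | zero => simp
      | succ m =>
        have := h1 m
        simpa [List.take_succ_cons] using this
    · simpa using h2

lemma isMot_UD {a b : List MStep} (ha : IsMot a) (hb : IsMot b) :
    IsMot (MStep.U :: (a ++ MStep.D :: b)) := by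
  constructor
  · intro m
    cases m with
    | zero => simp
    | succ m =>
      rw [List.take_succ_cons]
      rw [List.take_append]
      rcases Nat.eq_zero_or_pos (m - a.length) with hk | hk
      · rw [hk]
        have := ha.1 m
        simp only [List.take_zero, List.append_nil, cd_cons_U, cu_cons_U, cd_append, cu_append]
        omega
      · obtain ⟨k', hk'⟩ : ∃ k', m - a.length = k'+1 := ⟨m - a.length - 1, by omega⟩
        rw [hk', List.take_succ_cons]
        rw [List.take_of_length_le (show a.length ≤ m by omega)]
        have h1 := ha.2
        have h2 := hb.1 k'
        simp only [cd_cons_U, cu_cons_U, cd_append, cu_append, cd_cons_D, cu_cons_D]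
        omega
  · have h1 := ha.2
    have h2 := hb.2
    simp only [cd_cons_U, cu_cons_U, cd_append, cu_append, cd_cons_D, cu_cons_D]
    omega

lemma isMot_decomp {l : List MStep} (hm : IsMot l) (hne : l ≠ []) :
    (∃ t, l = MStep.L :: t ∧ IsMot t) ∨
    (∃ a b, l = MStep.U :: (a ++ MStep.D :: b) ∧ IsMot a ∧ IsMot b) := by
  rcases l with _ | ⟨s, t⟩
  · exact absurd rfl hne
  cases s
  case L => exact Or.inl ⟨t, rfl, isMot_cons_L.1 hm⟩
  case D =>
    exfalso
    have := hm.1 1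
    simp [List.take_succ_cons] at this
  case U =>
  right
  have hbalt : cd t = cu t + 1 := by
    have h2 := hm.2
    simp at h2
    omega
  have hex : ∃ m, cu (t.take m) < cd (t.take m) := by
    refine ⟨t.length, ?_⟩
    rw [List.take_length]
    omega
  classical
  have hj0 : Nat.find hex ≠ 0 := by
    intro h
    have := Nat.find_spec hex
    rw [h] at this
    simp at this
  obtain ⟨j', hJ⟩ : ∃ j', Nat.find hex = j' + 1 := ⟨Nat.find hex - 1, by omega⟩
  have hspec : cu (t.take (j'+1)) < cd (t.take (j'+1)) := hJ ▸ Nat.find_spec hex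
  have hmin : ∀ m ≤ j', cd (t.take m) ≤ cu (t.take m) := by
    intro m hm'
    have := Nat.find_min hex (show m < Nat.find hex by omega)
    omega
  have hjlen : j' < t.length := by
    by_contra hc
    push_neg at hc
    have e1 : t.take j' = t := List.take_of_length_le hc
    have e2 : t.take (j'+1) = t := List.take_of_length_le (by omega)
    have := hmin j' (le_refl _)
    rw [e1] at this
    rw [e2] at hspec
    omega
  have hprev := hmin j' (le_refl _)
  have htakej : t.take (j'+1) = t.take j' ++ [t[j']] := by
    rw [List.take_succ, List.getElem?_eq_getElem hjlen]
    simp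
  have hgetD : t[j'] = MStep.D := by
    rcases hD : t[j'] with _ | _ | _ <;>
      [skip; skip; rfl] <;>
      (exfalso
       rw [htakej, hD] at hspec
       simp at hspec
       omega)
  have hcnt1 : cd (t.take (j'+1)) = cd (t.take j') + 1 := by
    rw [htakej, hgetD]; simp
  have hcnt2 : cu (t.take (j'+1)) = cu (t.take j') := by
    rw [htakej, hgetD]; simp
  have hbal : cd (t.take j') = cu (t.take j') := by omega
  refine ⟨t.take j', t.drop (j'+1), ?_, ?_, ?_⟩
  · congr 1
    have hd : t.drop j' = t[j'] :: t.drop (j'+1) := List.drop_eq_getElem_cons hjlen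
    rw [← hgetD]
    conv_lhs => rw [← List.take_append_drop j' t]
    rw [hd]
  · constructor
    · intro m
      rw [List.take_take]
      exact hmin _ (by omega)
    · exact hbal
  · constructor
    · intro m
      have h1 := hm.1 (j'+1+m+1)
      rw [List.take_succ_cons, List.take_add, htakej, hgetD] at h1
      simp only [cd_cons_U, cu_cons_U, cd_append, cu_append, cd_cons_D, cu_cons_D] at h1
      simp at h1
      omega
    · have e : t = t.take (j'+1) ++ t.drop (j'+1) := (List.take_append_drop _ t).symm
      rw [e] at hbalt
      simp only [cd_append, cu_append] at hbalt
      omega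

lemma UD_len_eq {a1 b1 a2 b2 : List MStep} (h1 : IsMot a1) (h2 : IsMot a2)
    (he : a1 ++ MStep.D :: b1 = a2 ++ MStep.D :: b2) : a1.length = a2.length := by
  by_contra hne
  have key : ∀ (x1 y1 x2 y2 : List MStep), IsMot x2 → IsMot x1 →
      x1 ++ MStep.D :: y1 = x2 ++ MStep.D :: y2 → x1.length < x2.length → False := by
    intro x1 y1 x2 y2 hx2 hx1 he hlt
    have hpre : x2.take x1.length = x1 := by
      have := congrArg (List.take x1.length) he
      rw [List.take_append, List.take_append] at this
      rw [Nat.sub_self, Nat.sub_eq_zero_of_le (le_of_lt hlt)] at this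
      simp only [List.take_zero, List.append_nil, List.take_length] at this
      exact this.symm
    have hel : x2[x1.length]'hlt = MStep.D := by
      have := congrArg (fun l : List MStep => l[x1.length]?) he
      rw [List.getElem?_append_right (le_refl _), Nat.sub_self] at this
      rw [List.getElem?_append_left hlt] at this
      rw [List.getElem?_eq_getElem hlt] at this
      simp at this
      exact this.symm
    have htake : x2.take (x1.length + 1) = x1 ++ [MStep.D] := by
      rw [List.take_succ, List.getElem?_eq_getElem hlt, hel, hpre]
      simp
    have hc := hx2.1 (x1.length + 1)
    rw [htake] at hc
    have hb := hx1.2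
    simp at hc
    omega
  rcases Nat.lt_or_ge a1.length a2.length with h | h
  · exact key a1 b1 a2 b2 h2 h1 he h
  · exact key a2 b2 a1 b1 h1 h2 he.symm (by omega)

lemma UD_inj {a1 b1 a2 b2 : List MStep} (h1 : IsMot a1) (h2 : IsMot a2)
    (he : a1 ++ MStep.D :: b1 = a2 ++ MStep.D :: b2) : a1 = a2 ∧ b1 = b2 := by
  have hl := UD_len_eq h1 h2 he
  obtain ⟨e1, e2⟩ := List.append_inj he hl
  exact ⟨e1, List.cons_injective e2⟩

noncomputable def motz (n : ℕ) : ℕ := Nat.card (MPath n)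

lemma motz_zero : motz 0 = 1 := by
  rw [motz, Nat.card_eq_one_iff_unique]
  constructor
  · constructor
    intro ⟨l1, hl1, _⟩ ⟨l2, hl2, _⟩
    apply Subtype.ext
    simp only
    rw [List.length_eq_zero_iff] at hl1 hl2
    rw [hl1, hl2]
  · exact ⟨⟨[], rfl, isMot_nil⟩⟩

noncomputable instance mpathFintype (n : ℕ) : Fintype (MPath n) := Fintype.ofFinite _

lemma motz_succ (n : ℕ) :
    motz (n+1) = motz n + ∑ k ∈ Finset.range n, motz k * motz (n-1-k) := by
  classical
  set g : (MPath n ⊕ (Σ k : Fin n, MPath k × MPath (n-1-k))) → MPath (n+1) := fun x =>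
    match x with
    | Sum.inl ⟨t, ht, hmt⟩ => ⟨MStep.L :: t, by simp [ht], isMot_cons_L.2 hmt⟩
    | Sum.inr ⟨k, ⟨a, ha, hma⟩, ⟨b, hb, hmb⟩⟩ =>
        ⟨MStep.U :: (a ++ MStep.D :: b), by
          simp only [List.length_cons, List.length_append]
          have := k.2
          omega, isMot_UD hma hmb⟩
    with hg
  have hbij : Function.Bijective g := by
    constructor
    · rintro (⟨t1, ht1, hmt1⟩ | ⟨k1, ⟨a1, ha1, hma1⟩, ⟨b1, hb1, hmb1⟩⟩)
        (⟨t2, ht2, hmt2⟩ | ⟨k2, ⟨a2, ha2, hma2⟩, ⟨b2, hb2, hmb2⟩⟩) he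
      · have he' : MStep.L :: t1 = MStep.L :: t2 := congrArg Subtype.val he
        apply congrArg Sum.inl
        apply Subtype.ext
        exact List.cons_injective he'
      · exact absurd (congrArg Subtype.val he) (by intro h; cases h)
      · exact absurd (congrArg Subtype.val he) (by intro h; cases h)
      · have he' : MStep.U :: (a1 ++ MStep.D :: b1) = MStep.U :: (a2 ++ MStep.D :: b2) :=
          congrArg Subtype.val he
        obtain ⟨ea, eb⟩ := UD_inj hma1 hma2 (List.cons_injective he')
        clear he he'
        subst ea
        subst eb
        have hk : k1 = k2 := by
          apply Fin.ext
          rw [← ha1, ← ha2]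
        subst hk
        rfl
    · rintro ⟨l, hl, hml⟩
      have hne : l ≠ [] := by
        intro h
        rw [h] at hl
        simp at hl
      rcases isMot_decomp hml hne with ⟨t, rfl, hmt⟩ | ⟨a, b, rfl, hma, hmb⟩
      · exact ⟨Sum.inl ⟨t, by simpa using hl, hmt⟩, rfl⟩
      · have hlen : a.length + b.length + 2 = n + 1 := by
          simp only [List.length_cons, List.length_append] at hl
          omega
        refine ⟨Sum.inr ⟨⟨a.length, by omega⟩, ⟨a, rfl, hma⟩, ⟨b, by show b.length = n - 1 - a.length; omega, hmb⟩⟩, rfl⟩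
  have hcard := Nat.card_congr (Equiv.ofBijective g hbij)
  rw [motz, ← hcard, Nat.card_sum]
  congr 1
  rw [Nat.card_eq_fintype_card, Fintype.card_sigma]
  rw [Fin.sum_univ_eq_sum_range (fun j => Fintype.card (MPath j × MPath (n-1-j)))]
  apply Finset.sum_congr rfl
  intro k hk
  rw [Fintype.card_prod, motz, motz, Nat.card_eq_fintype_card, Nat.card_eq_fintype_card]

end Count

lemma motz_eq (M : ℕ → ℕ) (hM0 : M 0 = 1)
    (hMrec : ∀ n, M (n + 1) = M n + ∑ k ∈ Finset.range n, M k * M (n - 1 - k)) :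
    ∀ n, motz n = M n := by
  intro n
  induction n using Nat.strong_induction_on with
  | _ n ih =>
    match n with
    | 0 => rw [motz_zero, hM0]
    | (m+1) =>
      rw [motz_succ, hMrec]
      congr 1
      · exact ih m (by omega)
      · apply Finset.sum_congr rfl
        intro k hk
        simp only [Finset.mem_range] at hk
        rw [ih k (by omega), ih (m-1-k) (by omega)]

/-- The number of reverse alternating involutions of length 2n avoiding 4321
is the n-th Motzkin number. -/
theorem card_RAI_even_avoiding_4321 (M : ℕ → ℕ) (hM0 : M 0 = 1)
    (hMrec : ∀ n, M (n + 1) = M n + ∑ k ∈ Finset.range n, M k * M (n - 1 - k))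
    (n : ℕ) :
    Nat.card {π : Equiv.Perm (Fin (2 * n)) //
      IsInvolution π ∧ IsRevAlternating π ∧ Avoids π p4321} = M n := by
  have e : MPath n ≃ {π : Equiv.Perm (Fin (2 * n)) //
      IsInvolution π ∧ IsRevAlternating π ∧ Avoids π p4321} :=
    { toFun := fun x => ⟨mkPerm x.1 x.2.2 x.2.1,
        mkPerm_involution _ _ _, mkPerm_revAlt _ _ _, mkPerm_avoids _ _ _⟩
      invFun := fun y => ⟨lOf y.1, lOf_length y.1, lOf_isMot y.1 y.2.1 y.2.2.1 y.2.2.2⟩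
      left_inv := fun x => Subtype.ext (lOf_mkPerm x.2.2 x.2.1)
      right_inv := fun y => Subtype.ext (mkPerm_lOf y.1 y.2.1 y.2.2.1 y.2.2.2) }
  rw [← Nat.card_congr e]
  exact motz_eq M hM0 hMrec n
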